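/- Let A, B, C be pairwise coprime polynomials in ℂ[x], not all constant, satisfying A + B = C. If k denotes the number of distinct roots of the product A·B·C, then max(deg A, deg B, deg C) ≤ k − 1. -/

import Mathlib

open Polynomial UniqueFactorizationMonoid

private lemma squarefree_prod_primes {M : Type*} [CommMonoidWithZero M] [IsCancelMulZero M]
    [NormalizationMonoid M] [UniqueFactorizationMonoid M]
    (s : Finset M) (hp : ∀ p ∈ s, Prime p) (hn : ∀ p ∈ s, normalize p = p) :
    Squarefree (s.prod id) := by
  classical
  induction s using Finset.induction_on with
  | empty => simp only [Finset.prod_empty]; exact squarefree_one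
  | @insert p s hx ih =>
    rw [Finset.prod_insert hx]
    have hpp : Prime p := hp p (Finset.mem_insert_self p s)
    have hps : ¬ p ∣ s.prod id := by
      intro hdvd
      obtain ⟨q, hq, hpq⟩ := hpp.exists_mem_finset_dvd hdvd
      have hqp : Prime q := hp q (Finset.mem_insert_of_mem hq)
      have hassoc : Associated p q := hpp.associated_of_dvd hqp hpq
      have : p = q := by
        rw [← hn p (Finset.mem_insert_self p s), ← hn q (Finset.mem_insert_of_mem hq)]
        exact normalize_eq_normalize hassoc.dvd hassoc.symm.dvd
      exact hx (this ▸ hq)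
    refine squarefree_mul_iff.mpr ⟨?_, hpp.squarefree, ?_⟩
    · intro d hdp hds
      obtain ⟨c, hc⟩ := hdp
      rcases hpp.irreducible.isUnit_or_isUnit hc with h | h
      · exact h
      · exfalso
        have hpc : p = d * c := hc
        have hpd : Associated p d := hpc ▸ associated_mul_unit_left d c h
        exact hps (hpd.dvd.trans hds)
    · exact ih (fun q hq => hp q (Finset.mem_insert_of_mem hq))
        (fun q hq => hn q (Finset.mem_insert_of_mem hq))

theorem mason_abc (A B C : ℂ[X])
    (hAB : IsCoprime A B) (hAC : IsCoprime A C) (hBC : IsCoprime B C)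
    (hconst : ¬ (A.natDegree = 0 ∧ B.natDegree = 0 ∧ C.natDegree = 0))
    (hsum : A + B = C) :
    max (max A.natDegree B.natDegree) C.natDegree
      ≤ (A * B * C).roots.toFinset.card - 1 := by
  -- nonzeroness
  have hA : A ≠ 0 := by
    rintro rfl
    have hB0 : B.natDegree = 0 := natDegree_eq_zero_of_isUnit (isCoprime_zero_left.mp hAB)
    have hC : C = B := by rw [← hsum, zero_add]
    exact hconst ⟨natDegree_zero, hB0, hC ▸ hB0⟩
  have hB : B ≠ 0 := by
    rintro rfl
    have hA0 : A.natDegree = 0 := natDegree_eq_zero_of_isUnit (isCoprime_zero_right.mp hAB)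
    have hC : C = A := by rw [← hsum, add_zero]
    exact hconst ⟨hA0, natDegree_zero, hC ▸ hA0⟩
  have hC : C ≠ 0 := by
    rintro rfl
    have hA0 : A.natDegree = 0 := natDegree_eq_zero_of_isUnit (isCoprime_zero_right.mp hAC)
    have hBA : B = -A := by linear_combination hsum
    have hB0 : B.natDegree = 0 := by rw [hBA, natDegree_neg]; exact hA0
    exact hconst ⟨hA0, hB0, natDegree_zero⟩
  have hsum' : A + B + (-C) = 0 := by rw [hsum]; ring
  have habc := Polynomial.abc hA hB (neg_ne_zero.mpr hC) hAB hsum'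
  rcases habc with ⟨h1, h2, h3⟩ | ⟨d1, d2, d3⟩
  · -- rewrite radical
    have hrw : A * B * (-C) = -(A * B * C) := by ring
    rw [hrw, UniqueFactorizationDomain.radical_neg] at h1 h2 h3
    rw [natDegree_neg] at h3
    -- bound radical degree by distinct roots
    set P := A * B * C with hP
    have hPne : P ≠ 0 := mul_ne_zero (mul_ne_zero hA hB) hC
    have hsf : Squarefree (UniqueFactorizationMonoid.radical P) := by
      apply squarefree_prod_primes
      · intro p hp
        exact UniqueFactorizationMonoid.prime_of_normalized_factor p (UniqueFactorizationMonoid.mem_primeFactors.mp hp)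
      · intro p hp
        exact UniqueFactorizationMonoid.normalize_normalized_factor p (UniqueFactorizationMonoid.mem_primeFactors.mp hp)
    have hsep : (UniqueFactorizationMonoid.radical P).Separable :=
      PerfectField.separable_iff_squarefree.mpr hsf
    have hsplits : (UniqueFactorizationMonoid.radical P).Splits :=
      IsAlgClosed.splits _
    have hdeg : (UniqueFactorizationMonoid.radical P).natDegree
        = (UniqueFactorizationMonoid.radical P).roots.toFinset.card := by
      rw [hsplits.natDegree_eq_card_roots,
        Multiset.toFinset_card_of_nodup (nodup_roots hsep)]
    have hsub : (UniqueFactorizationMonoid.radical P).roots.toFinset ⊆ P.roots.toFinset := by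
      intro x hx
      rw [Multiset.mem_toFinset] at hx ⊢
      exact Multiset.mem_of_le
        (roots.le_of_dvd hPne (UniqueFactorizationMonoid.radical_dvd_self (a := P))) hx
    have hle : (UniqueFactorizationMonoid.radical P).natDegree ≤ P.roots.toFinset.card := by
      rw [hdeg]; exact Finset.card_le_card hsub
    omega
  · exfalso
    apply hconst
    exact ⟨natDegree_eq_zero_of_derivative_eq_zero d1,
      natDegree_eq_zero_of_derivative_eq_zero d2, by
        have := natDegree_eq_zero_of_derivative_eq_zero d3
        rwa [natDegree_neg] at this⟩
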